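/- Let f, f' : X → X' be continuous maps and k : X' → Z a continuous map admitting a continuous left homotopy inverse k' : Z → X' (i.e. k' ∘ k ≃ 1_{X'}). Then D(k ∘ f, k ∘ f') = D(f, f'). -/

import Mathlib

/-- The (higher) homotopic distance of a family of continuous maps `f i : X → Y`:
the least `l` such that `X` admits an open cover by `l` open sets on each of which
all the maps restrict to pairwise homotopic maps (`∞` if no such cover exists). -/
noncomputable def homDist {X Y : Type*} [TopologicalSpace X] [TopologicalSpace Y]
    {k : ℕ} (f : Fin k → C(X, Y)) : ℕ∞ :=
  sInf ((fun n : ℕ => (n : ℕ∞)) '' {n : ℕ | ∃ U : Fin n → Set X,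
    (∀ j, IsOpen (U j)) ∧ (⋃ j, U j) = Set.univ ∧
    ∀ j i i', ((f i).restrict (U j)).Homotopic ((f i').restrict (U j))})

/-- Homotopic distance of two maps. -/
noncomputable def homDist2 {X Y : Type*} [TopologicalSpace X] [TopologicalSpace Y]
    (f g : C(X, Y)) : ℕ∞ :=
  homDist ![f, g]

theorem homDist2_comp_left_of_left_homotopy_inverse {X X' Z : Type*} [TopologicalSpace X]
    [TopologicalSpace X'] [TopologicalSpace Z] (f f' : C(X, X')) (k : C(X', Z))
    (k' : C(Z, X')) (h : (k'.comp k).Homotopic (ContinuousMap.id X')) :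
    homDist2 (k.comp f) (k.comp f') = homDist2 f f' := by
  have key : ∀ (U : Set X) (i : Fin 2),
      ((![k.comp f, k.comp f'] : Fin 2 → C(X, Z)) i).restrict U
        = k.comp ((![f, f'] i).restrict U) := by
    intro U i; fin_cases i <;> rfl
  have equiv : ∀ (U : Set X) (i i' : Fin 2),
      (((![k.comp f, k.comp f'] : Fin 2 → C(X, Z)) i).restrict U).Homotopic
        ((![k.comp f, k.comp f'] i').restrict U) ↔
      ((![f, f'] i).restrict U).Homotopic ((![f, f'] i').restrict U) := by
    intro U i i'
    rw [key, key]
    have absorb : ∀ g : C(U, X'), (k'.comp (k.comp g)).Homotopic g := by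
      intro g
      have h1 := ContinuousMap.Homotopic.comp h (ContinuousMap.Homotopic.refl g)
      rw [ContinuousMap.comp_assoc, ContinuousMap.id_comp] at h1
      exact h1
    constructor
    · intro hk
      have h1 := ContinuousMap.Homotopic.comp (ContinuousMap.Homotopic.refl k') hk
      exact ((absorb _).symm.trans h1).trans (absorb _)
    · intro hf
      exact ContinuousMap.Homotopic.comp (ContinuousMap.Homotopic.refl k) hf
  unfold homDist2 homDist
  congr 1
  ext n
  simp only [Set.mem_image, Set.mem_setOf_eq]
  constructor <;> rintro ⟨m, ⟨U, hU, hcov, hhom⟩, rfl⟩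
  · exact ⟨m, ⟨U, hU, hcov, fun j i i' => (equiv (U j) i i').mp (hhom j i i')⟩, rfl⟩
  · exact ⟨m, ⟨U, hU, hcov, fun j i i' => (equiv (U j) i i').mpr (hhom j i i')⟩, rfl⟩
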